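/- For every integer n ≥ 1, the signed sum over all connected simple graphs on the labeled vertex set {1,…,n} satisfies Σ_{g ∈ C_n} (−1)^{|E(g)|} = (−1)^{n−1} (n−1)!, where C_n is the family of connected simple graphs on {1,…,n} and |E(g)| is the number of edges of g. -/

import Mathlib

namespace Stmt16

open scoped Classical

open SimpleGraph

variable {V : Type} [Fintype V]

/-- The signed sum over connected graphs on `V`. -/
noncomputable def connSum (V : Type) [Fintype V] : ℤ :=
  ∑ g ∈ Finset.univ.filter (fun g : SimpleGraph V => g.Connected),
    (-1 : ℤ) ^ g.edgeSet.ncard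

/-! ### Transport along equivalences -/

lemma edgeSet_map_eq {U W : Type} (f : U ↪ W) (h : SimpleGraph U) :
    (h.map f).edgeSet = Sym2.map f '' h.edgeSet := by
  ext e
  induction e using Sym2.ind with
  | _ x y =>
    simp only [mem_edgeSet, map_adj, Set.mem_image]
    constructor
    · rintro ⟨u, v, huv, rfl, rfl⟩
      exact ⟨s(u, v), huv, rfl⟩
    · rintro ⟨e', he', hmap⟩
      induction e' using Sym2.ind with
      | _ u v =>
        rw [Sym2.map_pair_eq, Sym2.eq_iff] at hmap
        rcases hmap with ⟨rfl, rfl⟩ | ⟨rfl, rfl⟩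
        · exact ⟨u, v, he', rfl, rfl⟩
        · exact ⟨v, u, he'.symm, rfl, rfl⟩

lemma ncard_edgeSet_map {U W : Type} (f : U ↪ W) (h : SimpleGraph U) :
    (h.map f).edgeSet.ncard = h.edgeSet.ncard := by
  rw [edgeSet_map_eq, Set.ncard_image_of_injective _ (Sym2.map.injective f.injective)]

lemma connSum_congr {U W : Type} [Fintype U] [Fintype W] (e : U ≃ W) :
    connSum U = connSum W := by
  unfold connSum
  refine Finset.sum_nbij' (i := fun g : SimpleGraph U => g.map e.toEmbedding)
    (j := fun g : SimpleGraph W => g.map e.symm.toEmbedding) ?_ ?_ ?_ ?_ ?_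
  · intro g hg
    simp only [Finset.mem_filter, Finset.mem_univ, true_and] at hg ⊢
    exact ((Iso.map e g).connected_iff).mp hg
  · intro g hg
    simp only [Finset.mem_filter, Finset.mem_univ, true_and] at hg ⊢
    exact ((Iso.map e.symm g).connected_iff).mp hg
  · intro g _
    ext x y
    simp only [map_adj, Equiv.coe_toEmbedding, Equiv.coe_toEmbedding]
    constructor
    · rintro ⟨-, u, v, ⟨-, a, b, hab, rfl, rfl⟩, hu, hv⟩
      simp only [Equiv.symm_apply_apply] at hu hv
      subst hu; subst hv; exact hab
    · intro hxy
      exact ⟨hxy.ne, e x, e y, ⟨e.injective.ne hxy.ne, x, y, hxy, rfl, rfl⟩, by simp, by simp⟩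
  · intro g _
    ext x y
    simp only [map_adj, Equiv.coe_toEmbedding, Equiv.coe_toEmbedding]
    constructor
    · rintro ⟨-, u, v, ⟨-, a, b, hab, rfl, rfl⟩, hu, hv⟩
      simp only [Equiv.apply_symm_apply] at hu hv
      subst hu; subst hv; exact hab
    · intro hxy
      exact ⟨hxy.ne, e.symm x, e.symm y, ⟨e.symm.injective.ne hxy.ne, x, y, hxy, rfl, rfl⟩, by simp, by simp⟩
  · intro g _
    rw [ncard_edgeSet_map]

/-! ### Reachability transfer -/

lemma reach_transfer {g g' : SimpleGraph V} {v0 a b : V}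
    (hadj : ∀ x y, g.Adj x y → g'.Adj x y ∨ s(x, y) = s(a, b))
    (ha : ¬ g'.Reachable v0 a) (hb : ¬ g'.Reachable v0 b) {w : V}
    (h : g.Reachable v0 w) : g'.Reachable v0 w := by
  obtain ⟨p⟩ := h
  suffices H : ∀ u w : V, g.Walk u w → g'.Reachable v0 u → g'.Reachable v0 w from
    H v0 w p (Reachable.refl v0)
  intro u w p
  induction p with
  | nil => exact id
  | @cons u x w hxy q ih =>
    intro hu
    rcases hadj u x hxy with h' | h'
    · exact ih (hu.trans h'.reachable)
    · rcases Sym2.eq_iff.mp h' with ⟨rfl, rfl⟩ | ⟨rfl, rfl⟩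
      · exact absurd hu ha
      · exact absurd hu hb

/-! ### The toggle involution -/

/-- Toggle the edge `s(a,b)` of `g`. -/
def toggle (a b : V) (g : SimpleGraph V) : SimpleGraph V :=
  SimpleGraph.fromEdgeSet (symmDiff g.edgeSet {s(a, b)})

variable {a b : V} {g : SimpleGraph V}

lemma edgeSet_toggle (hab : a ≠ b) :
    (toggle a b g).edgeSet = symmDiff g.edgeSet {s(a, b)} := by
  rw [toggle, edgeSet_fromEdgeSet]
  ext f
  simp only [Set.mem_diff, Set.mem_setOf_eq, and_iff_left_iff_imp]
  intro hf hdiag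
  rcases Set.mem_symmDiff.mp hf with ⟨hf1, _⟩ | ⟨hf1, _⟩
  · exact g.not_isDiag_of_mem_edgeSet hf1 hdiag
  · rw [Set.mem_singleton_iff] at hf1
    subst hf1
    exact hab (Sym2.mk_isDiag_iff.mp hdiag)

lemma toggle_toggle (hab : a ≠ b) : toggle a b (toggle a b g) = g := by
  rw [toggle, edgeSet_toggle hab, symmDiff_symmDiff_cancel_right, fromEdgeSet_edgeSet]

lemma toggle_ne (hab : a ≠ b) : toggle a b g ≠ g := by
  intro h
  have h2 := congrArg SimpleGraph.edgeSet h
  rw [edgeSet_toggle hab] at h2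
  by_cases he : s(a, b) ∈ g.edgeSet
  · have : s(a, b) ∉ symmDiff g.edgeSet {s(a, b)} := by
      rw [Set.mem_symmDiff]; simp [he]
    rw [h2] at this; exact this he
  · have : s(a, b) ∈ symmDiff g.edgeSet {s(a, b)} := by
      rw [Set.mem_symmDiff]; simp [he]
    rw [h2] at this; exact he this

lemma pow_toggle (hab : a ≠ b) :
    (-1 : ℤ) ^ g.edgeSet.ncard + (-1 : ℤ) ^ (toggle a b g).edgeSet.ncard = 0 := by
  rw [edgeSet_toggle hab]
  set A := g.edgeSet with hA
  by_cases he : s(a, b) ∈ A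
  · have h1 : symmDiff A {s(a, b)} = A \ {s(a, b)} := by
      ext f
      rw [Set.mem_symmDiff]
      simp only [Set.mem_diff, Set.mem_singleton_iff]
      constructor
      · rintro (⟨h1, h2⟩ | ⟨h1, h2⟩)
        · exact ⟨h1, h2⟩
        · exact absurd (h1 ▸ he) h2
      · rintro ⟨h1, h2⟩; exact Or.inl ⟨h1, h2⟩
    rw [h1]
    have h2 : A = insert s(a, b) (A \ {s(a, b)}) := by
      rw [Set.insert_diff_singleton, Set.insert_eq_of_mem he]
    have h3 : A.ncard = (A \ {s(a, b)}).ncard + 1 := by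
      rw [h2, Set.ncard_insert_of_notMem (by simp) (Set.toFinite _),
        Set.insert_diff_singleton, Set.insert_eq_of_mem he]
    rw [h3, pow_succ]
    ring
  · have h1 : symmDiff A {s(a, b)} = insert s(a, b) A := by
      ext f
      rw [Set.mem_symmDiff]
      simp only [Set.mem_insert_iff, Set.mem_singleton_iff]
      constructor
      · rintro (⟨h1, h2⟩ | ⟨h1, h2⟩)
        · exact Or.inr h1
        · exact Or.inl h1
      · rintro (rfl | h2)
        · exact Or.inr ⟨rfl, he⟩
        · exact Or.inl ⟨h2, fun h => he (h ▸ h2)⟩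
    rw [h1, Set.ncard_insert_of_notMem he (Set.toFinite _), pow_succ]
    ring

lemma sum_toggle_eq_zero (hab : a ≠ b) {s : Finset (SimpleGraph V)}
    (hmem : ∀ g ∈ s, toggle a b g ∈ s) :
    ∑ g ∈ s, (-1 : ℤ) ^ g.edgeSet.ncard = 0 := by
  refine Finset.sum_involution (fun g _ => toggle a b g) (fun g _ => pow_toggle hab)
    (fun g _ _ => toggle_ne hab) hmem (fun g _ => toggle_toggle hab)

lemma toggle_adj (hab : a ≠ b) {x y : V} :
    (toggle a b g).Adj x y ↔ s(x, y) ∈ symmDiff g.edgeSet {s(a, b)} ∧ x ≠ y := by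
  rw [toggle, fromEdgeSet_adj]

lemma reachable_toggle (hab : a ≠ b) {v0 : V}
    (ha : ¬ g.Reachable v0 a) (hb : ¬ g.Reachable v0 b) (w : V) :
    (toggle a b g).Reachable v0 w ↔ g.Reachable v0 w := by
  have hadj1 : ∀ x y, (toggle a b g).Adj x y → g.Adj x y ∨ s(x, y) = s(a, b) := by
    intro x y hxy
    rw [toggle_adj hab] at hxy
    rcases Set.mem_symmDiff.mp hxy.1 with ⟨h1, _⟩ | ⟨h1, _⟩
    · exact Or.inl h1
    · exact Or.inr h1
  have fwd : ∀ w, (toggle a b g).Reachable v0 w → g.Reachable v0 w := fun w h =>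
    reach_transfer hadj1 ha hb h
  have hadj2 : ∀ x y, g.Adj x y → (toggle a b g).Adj x y ∨ s(x, y) = s(a, b) := by
    intro x y hxy
    by_cases he : s(x, y) = s(a, b)
    · exact Or.inr he
    · refine Or.inl ((toggle_adj hab).mpr ⟨Set.mem_symmDiff.mpr (Or.inl ⟨hxy, ?_⟩), hxy.ne⟩)
      simpa using he
  exact ⟨fwd w, fun h => reach_transfer hadj2 (fun h' => ha (fwd a h')) (fun h' => hb (fwd b h')) h⟩

/-! ### Walks in mapped graphs stay in range -/

lemma reachable_map_strong {U : Type} (f : U ↪ V) (h : SimpleGraph U) :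
    ∀ x y : V, (h.map f).Walk x y → ∀ u : U, f u = x →
      ∃ z : U, f z = y ∧ h.Reachable u z := by
  intro x y p
  induction p with
  | nil => exact fun u hu => ⟨u, hu, Reachable.refl u⟩
  | @cons x m y hadj q ih =>
    intro u hu
    obtain ⟨-, u', v', huv, hu', hv'⟩ := hadj
    obtain ⟨z, hz, hreach⟩ := ih v' hv'
    have : u' = u := f.injective (hu'.trans hu.symm)
    subst this
    exact ⟨z, hz, huv.reachable.trans hreach⟩

lemma reachable_map_iff {U : Type} (f : U ↪ V) (h : SimpleGraph U) (u w : U) :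
    (h.map f).Reachable (f u) (f w) ↔ h.Reachable u w := by
  constructor
  · rintro ⟨p⟩
    obtain ⟨z, hz, hreach⟩ := reachable_map_strong f h _ _ p u rfl
    rwa [f.injective hz] at hreach
  · intro h'
    exact h'.map (SimpleGraph.Embedding.map f h).toHom

lemma reachable_map_range {U : Type} (f : U ↪ V) (h : SimpleGraph U) {u : U} {y : V}
    (hr : (h.map f).Reachable (f u) y) : ∃ z : U, f z = y := by
  obtain ⟨p⟩ := hr
  obtain ⟨z, hz, _⟩ := reachable_map_strong f h _ _ p u rfl
  exact ⟨z, hz⟩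

/-! ### The fiber over a set `S` with `Sᶜ = {v}` -/

/-- The set of vertices reachable from `v0`. -/
def reachSet (v0 : V) (g : SimpleGraph V) : Set V := {w | g.Reachable v0 w}

lemma fiber_sum_eq (v0 : V) (S : Set V) (v : V) (hv : Sᶜ = {v}) (hv0 : v0 ∈ S) :
    ∑ g ∈ Finset.univ.filter (fun g : SimpleGraph V => reachSet v0 g = S),
        (-1 : ℤ) ^ g.edgeSet.ncard = connSum ↥S := by
  have hmemS : ∀ x : V, x ∈ S ↔ x ≠ v := by
    intro x
    constructor
    · intro hx hxv; subst hxv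
      have : x ∈ Sᶜ := by rw [hv]; rfl
      exact this hx
    · intro hx
      by_contra h
      have : x ∈ Sᶜ := h
      rw [hv, Set.mem_singleton_iff] at this
      exact hx this
  set f : ↥S ↪ V := Function.Embedding.subtype _ with hf
  have hfval : ∀ x : ↥S, f x = (x : V) := fun x => rfl
  set v0' : ↥S := ⟨v0, hv0⟩ with hv0'
  rw [connSum]
  refine (Finset.sum_nbij' (i := fun g : SimpleGraph V => g.comap (fun x : ↥S => (x : V)))
    (j := fun h : SimpleGraph ↥S => h.map f) ?_ ?_ ?_ ?_ ?_)
  · -- forward map lands in connected graphs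
    intro g hg
    simp only [Finset.mem_filter, Finset.mem_univ, true_and] at hg ⊢
    -- first: g = (g.comap val).map f
    have hedge : ∀ x y : V, g.Adj x y → x ∈ S ∧ y ∈ S := by
      intro x y hxy
      by_cases hx : x ∈ S
      · refine ⟨hx, ?_⟩
        by_contra hy
        have hyv : y = v := by
          have : y ∈ Sᶜ := hy
          rwa [hv, Set.mem_singleton_iff] at this
        have hreach : g.Reachable v0 x := by rw [← hg] at hx; exact hx
        have : g.Reachable v0 y := hreach.trans hxy.reachable
        rw [← hg] at hy; exact hy this
      · exfalso
        by_cases hy : y ∈ S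
        · have hreach : g.Reachable v0 y := by rw [← hg] at hy; exact hy
          have : g.Reachable v0 x := hreach.trans hxy.symm.reachable
          rw [← hg] at hx; exact hx this
        · have hxv : x = v := by
            have : x ∈ Sᶜ := hx; rwa [hv, Set.mem_singleton_iff] at this
          have hyv : y = v := by
            have : y ∈ Sᶜ := hy; rwa [hv, Set.mem_singleton_iff] at this
          exact hxy.ne (hxv.trans hyv.symm)
    have hgeq : (g.comap (fun x : ↥S => (x : V))).map f = g := by
      ext x y
      simp only [map_adj, comap_adj, hfval]
      constructor
      · rintro ⟨u, w, huw, rfl, rfl⟩; exact huw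
      · intro hxy
        obtain ⟨hx, hy⟩ := hedge x y hxy
        exact ⟨⟨x, hx⟩, ⟨y, hy⟩, hxy, rfl, rfl⟩
    rw [connected_iff_exists_forall_reachable]
    refine ⟨v0', fun w => ?_⟩
    have h2 : ((g.comap (fun x : ↥S => (x : V))).map f).Reachable (f v0') (f w) := by
      rw [hgeq]
      show g.Reachable v0 (w : V)
      have hw : (w : V) ∈ reachSet v0 g := by rw [hg]; exact w.2
      exact hw
    exact (reachable_map_iff f _ v0' w).mp h2
  · -- backward map lands in the fiber
    intro h hh
    simp only [Finset.mem_filter, Finset.mem_univ, true_and] at hh ⊢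
    ext w
    simp only [reachSet, Set.mem_setOf_eq]
    constructor
    · intro hreach
      have : (f v0' : V) = v0 := rfl
      rw [← this] at hreach
      obtain ⟨z, hz⟩ := reachable_map_range f h hreach
      rw [← hz]; exact z.2
    · intro hw
      have hr : h.Reachable v0' ⟨w, hw⟩ := hh v0' ⟨w, hw⟩
      have := (reachable_map_iff f h v0' ⟨w, hw⟩).mpr hr
      exact this
  · -- left inverse (on the fiber)
    intro g hg
    simp only [Finset.mem_filter, Finset.mem_univ, true_and] at hg
    have hedge : ∀ x y : V, g.Adj x y → x ∈ S ∧ y ∈ S := by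
      intro x y hxy
      by_cases hx : x ∈ S
      · refine ⟨hx, ?_⟩
        by_contra hy
        have hreach : g.Reachable v0 x := by rw [← hg] at hx; exact hx
        have : g.Reachable v0 y := hreach.trans hxy.reachable
        rw [← hg] at hy; exact hy this
      · exfalso
        by_cases hy : y ∈ S
        · have hreach : g.Reachable v0 y := by rw [← hg] at hy; exact hy
          have : g.Reachable v0 x := hreach.trans hxy.symm.reachable
          rw [← hg] at hx; exact hx this
        · have hxv : x = v := by
            have : x ∈ Sᶜ := hx; rwa [hv, Set.mem_singleton_iff] at this
          have hyv : y = v := by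
            have : y ∈ Sᶜ := hy; rwa [hv, Set.mem_singleton_iff] at this
          exact hxy.ne (hxv.trans hyv.symm)
    ext x y
    simp only [map_adj, comap_adj, hfval]
    constructor
    · rintro ⟨u, w, huw, rfl, rfl⟩; exact huw
    · intro hxy
      obtain ⟨hx, hy⟩ := hedge x y hxy
      exact ⟨⟨x, hx⟩, ⟨y, hy⟩, hxy, rfl, rfl⟩
  · -- right inverse
    intro h _
    ext x y
    simp only [comap_adj, map_adj, hfval]
    constructor
    · rintro ⟨u, w, huw, hu, hw⟩
      have : u = x := Subtype.ext hu
      have : w = y := Subtype.ext hw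
      subst this; subst ‹u = x›; exact huw
    · intro hxy
      exact ⟨x, y, hxy, rfl, rfl⟩
  · -- values agree
    intro g hg
    simp only [Finset.mem_filter, Finset.mem_univ, true_and] at hg
    have hedge : ∀ x y : V, g.Adj x y → x ∈ S ∧ y ∈ S := by
      intro x y hxy
      by_cases hx : x ∈ S
      · refine ⟨hx, ?_⟩
        by_contra hy
        have hreach : g.Reachable v0 x := by rw [← hg] at hx; exact hx
        have : g.Reachable v0 y := hreach.trans hxy.reachable
        rw [← hg] at hy; exact hy this
      · exfalso
        by_cases hy : y ∈ S
        · have hreach : g.Reachable v0 y := by rw [← hg] at hy; exact hy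
          have : g.Reachable v0 x := hreach.trans hxy.symm.reachable
          rw [← hg] at hx; exact hx this
        · have hxv : x = v := by
            have : x ∈ Sᶜ := hx; rwa [hv, Set.mem_singleton_iff] at this
          have hyv : y = v := by
            have : y ∈ Sᶜ := hy; rwa [hv, Set.mem_singleton_iff] at this
          exact hxy.ne (hxv.trans hyv.symm)
    have hgeq : (g.comap (fun x : ↥S => (x : V))).map f = g := by
      ext x y
      simp only [map_adj, comap_adj, hfval]
      constructor
      · rintro ⟨u, w, huw, rfl, rfl⟩; exact huw
      · intro hxy
        obtain ⟨hx, hy⟩ := hedge x y hxy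
        exact ⟨⟨x, hx⟩, ⟨y, hy⟩, hxy, rfl, rfl⟩
    conv_lhs => rw [← hgeq]
    rw [ncard_edgeSet_map]

/-! ### The recursion -/

lemma connected_iff_reachSet_univ (v0 : V) (g : SimpleGraph V) :
    reachSet v0 g = Set.univ ↔ g.Connected := by
  constructor
  · intro h
    rw [connected_iff_exists_forall_reachable]
    exact ⟨v0, fun w => by
      have : w ∈ reachSet v0 g := h ▸ Set.mem_univ w
      exact this⟩
  · intro h
    ext w
    simp only [Set.mem_univ, iff_true]
    exact h v0 w

lemma connSum_indep {α : Type} (i1 i2 : Fintype α) : @connSum α i1 = @connSum α i2 := by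
  rw [Subsingleton.elim i1 i2]

lemma sum_univ_indep {α : Type} (i1 i2 : Fintype α) (p : α → Prop)
    (d1 d2 : DecidablePred p) (f : α → ℤ) :
    ∑ g ∈ @Finset.filter α p d1 (@Finset.univ α i1), f g
      = ∑ g ∈ @Finset.filter α p d2 (@Finset.univ α i2), f g := by
  rw [Subsingleton.elim i1 i2, Subsingleton.elim d1 d2]

lemma connSum_of_subsingleton (V : Type) [Fintype V] [Subsingleton V] [Nonempty V] :
    connSum V = 1 := by
  have hbot : ∀ g : SimpleGraph V, g = ⊥ := by
    intro g
    ext x y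
    simp only [bot_adj, iff_false]
    intro h
    exact h.ne (Subsingleton.elim x y)
  have hconn : ∀ g : SimpleGraph V, g.Connected := by
    intro g
    rw [connected_iff]
    exact ⟨by rw [hbot g]; exact preconnected_bot, ‹_›⟩
  have hval : ∀ g : SimpleGraph V, (-1 : ℤ) ^ g.edgeSet.ncard = 1 := by
    intro g
    rw [hbot g, edgeSet_bot]
    simp
  have huniv : Finset.univ.filter (fun g : SimpleGraph V => g.Connected) = Finset.univ := by
    refine Finset.eq_univ_of_forall ?_
    intro g
    exact Finset.mem_filter.mpr ⟨Finset.mem_univ g, hconn g⟩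
  haveI : Unique (SimpleGraph V) := ⟨⟨⊥⟩, hbot⟩
  rw [connSum, huniv, Finset.sum_congr rfl (fun g _ => hval g), Finset.sum_const,
    Finset.card_univ, Fintype.card_unique]
  simp

lemma recursion (V : Type) [Fintype V] (n : ℕ) (hcard : Fintype.card V = n + 2) :
    connSum V = -(n + 1 : ℤ) * connSum (Fin (n + 1)) := by
  haveI hnt : Nontrivial V := Fintype.one_lt_card_iff_nontrivial.mp (by omega)
  obtain ⟨v0, b0, hab0⟩ := exists_pair_ne V
  -- Sum over all graphs is zero
  have hall : ∑ g : SimpleGraph V, (-1 : ℤ) ^ g.edgeSet.ncard = 0 :=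
    sum_toggle_eq_zero hab0 (fun g _ => Finset.mem_univ _)
  -- Fiber the sum by the reachable set of v0
  have hfib : ∑ S : Set V, (∑ g ∈ Finset.univ.filter
        (fun g : SimpleGraph V => reachSet v0 g = S), (-1 : ℤ) ^ g.edgeSet.ncard)
      = ∑ g : SimpleGraph V, (-1 : ℤ) ^ g.edgeSet.ncard :=
    Finset.sum_fiberwise _ _ _
  set F : Set V → ℤ := fun S => ∑ g ∈ Finset.univ.filter
      (fun g : SimpleGraph V => reachSet v0 g = S), (-1 : ℤ) ^ g.edgeSet.ncard with hF
  -- The support of F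
  set T : Finset (Set V) := insert Set.univ
      ((Finset.univ.erase v0).image (fun v : V => ({v}ᶜ : Set V))) with hT
  have hvanish : ∀ S : Set V, S ∉ T → F S = 0 := by
    intro S hS
    by_cases hv0S : v0 ∈ S
    · -- S ≠ univ and S not a complement-singleton at v ≠ v0
      have hSne : S ≠ Set.univ := by
        intro h; subst h; rw [hT] at hS; exact hS (Finset.mem_insert_self _ _)
      have hScompl : Sᶜ.Nonempty := by
        rw [Set.nonempty_compl]; exact hSne
      obtain ⟨x, hx⟩ := hScompl
      have hnotsingle : Sᶜ ≠ {x} := by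
        intro h
        have hxv0 : x ≠ v0 := by
          intro hxeq; subst hxeq; exact hx hv0S
        apply hS
        rw [hT]
        refine Finset.mem_insert_of_mem (Finset.mem_image.mpr ⟨x, ?_, ?_⟩)
        · exact Finset.mem_erase.mpr ⟨hxv0, Finset.mem_univ _⟩
        · rw [← h, compl_compl]
      -- there are two distinct elements outside S
      have hexists : ∃ y ∈ Sᶜ, y ≠ x := by
        by_contra h
        push_neg at h
        apply hnotsingle
        ext z
        simp only [Set.mem_singleton_iff]
        exact ⟨fun hz => by by_contra hzx; exact hzx (h z hz), fun hz => hz ▸ hx⟩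
      obtain ⟨y, hy, hyx⟩ := hexists
      rw [hF]
      refine sum_toggle_eq_zero (a := x) (b := y) (fun h => hyx (h.symm)) ?_
      intro g hg
      simp only [Finset.mem_filter, Finset.mem_univ, true_and] at hg ⊢
      have hxr : ¬ g.Reachable v0 x := by
        intro h; exact hx (by rw [← hg] at hx ⊢; exact h)
      have hyr : ¬ g.Reachable v0 y := by
        intro h; exact hy (by rw [← hg] at hy ⊢; exact h)
      rw [← hg]
      ext w
      simp only [reachSet, Set.mem_setOf_eq]
      exact reachable_toggle (fun h => hyx h.symm) hxr hyr w
    · -- v0 ∉ S : fiber is empty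
      rw [hF]
      refine Finset.sum_eq_zero ?_
      intro g hg
      simp only [Finset.mem_filter, Finset.mem_univ, true_and] at hg
      exfalso
      apply hv0S
      rw [← hg]
      exact Reachable.refl v0
  have hTsum : ∑ S : Set V, F S = ∑ S ∈ T, F S := by
    refine (Finset.sum_subset (Finset.subset_univ T) ?_).symm
    intro S _ hS
    exact hvanish S hS
  have hunivnotmem : (Set.univ : Set V) ∉
      (Finset.univ.erase v0).image (fun v : V => ({v}ᶜ : Set V)) := by
    simp only [Finset.mem_image, not_exists]
    rintro z ⟨hz, hzeq⟩
    have : z ∈ ({z}ᶜ : Set V) := hzeq ▸ Set.mem_univ z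
    exact this rfl
  have hinj : ∀ x ∈ Finset.univ.erase v0, ∀ y ∈ Finset.univ.erase v0,
      ({x}ᶜ : Set V) = ({y}ᶜ : Set V) → x = y := by
    intro x _ y _ h
    have h2 := congrArg compl h
    rw [compl_compl, compl_compl] at h2
    exact Set.singleton_eq_singleton_iff.mp h2
  have hsumT : ∑ S ∈ T, F S = F Set.univ +
      ∑ v ∈ Finset.univ.erase v0, F ({v}ᶜ : Set V) := by
    rw [hT, Finset.sum_insert hunivnotmem, Finset.sum_image hinj]
  -- F univ = connSum V
  have hFuniv : F Set.univ = connSum V := by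
    rw [hF, connSum]
    refine Finset.sum_congr ?_ (fun _ _ => rfl)
    ext g
    simp only [Finset.mem_filter, Finset.mem_univ, true_and]
    exact connected_iff_reachSet_univ v0 g
  -- F {v}ᶜ = connSum (Fin (n+1)) for v ≠ v0
  have hFcompl : ∀ v : V, v ≠ v0 → F ({v}ᶜ : Set V) = connSum (Fin (n + 1)) := by
    intro v hvv0
    have hv0mem : v0 ∈ ({v}ᶜ : Set V) := by
      intro h
      exact hvv0 (Set.mem_singleton_iff.mp h).symm
    have h1 := fiber_sum_eq v0 ({v}ᶜ : Set V) v (by rw [compl_compl]) hv0mem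
    rw [hF]
    refine h1.trans ?_
    refine (connSum_indep _ _).trans (connSum_congr ?_)
    refine Fintype.equivFinOfCardEq ?_
    have h2 : Fintype.card ↥({v}ᶜ : Set V) = Fintype.card V - Fintype.card ↥({v} : Set V) :=
      Fintype.card_compl_set _
    have h3 : Fintype.card ↥({v} : Set V) = 1 := by simp
    rw [h2, h3, hcard]
    omega
  have hcard2 : (Finset.univ.erase v0).card = n + 1 := by
    rw [Finset.card_erase_of_mem (Finset.mem_univ v0), Finset.card_univ, hcard]
    omega
  have hfinal : (0 : ℤ) = connSum V + (n + 1 : ℤ) * connSum (Fin (n + 1)) := by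
    calc (0 : ℤ) = ∑ g : SimpleGraph V, (-1 : ℤ) ^ g.edgeSet.ncard := hall.symm
      _ = ∑ S : Set V, F S := hfib.symm
      _ = ∑ S ∈ T, F S := hTsum
      _ = F Set.univ + ∑ v ∈ Finset.univ.erase v0, F ({v}ᶜ : Set V) := hsumT
      _ = connSum V + ∑ v ∈ Finset.univ.erase v0, connSum (Fin (n + 1)) := by
          rw [hFuniv]
          congr 1
          refine Finset.sum_congr rfl ?_
          intro v hv
          exact hFcompl v (Finset.mem_erase.mp hv).1
      _ = connSum V + (n + 1 : ℤ) * connSum (Fin (n + 1)) := by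
          rw [Finset.sum_const, hcard2, nsmul_eq_mul]
          push_cast
          ring
  linarith

lemma connSum_formula : ∀ n : ℕ, connSum (Fin (n + 1)) = (-1) ^ n * (Nat.factorial n : ℤ) := by
  intro n
  induction n with
  | zero =>
    haveI : Subsingleton (Fin 1) := ⟨by decide⟩
    simpa using connSum_of_subsingleton (Fin 1)
  | succ m ih =>
    rw [recursion (Fin (m + 1 + 1)) m (by simp), ih, Nat.factorial_succ]
    push_cast
    ring

end Stmt16

open scoped Classical in
/-- Σ_{g ∈ C_n} (-1)^{|E(g)|} = (-1)^{n-1} (n-1)!. -/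
theorem stmt_16 (n : ℕ) (hn : 1 ≤ n) :
    ∑ g ∈ Finset.univ.filter (fun g : SimpleGraph (Fin n) => g.Connected),
        (-1 : ℤ) ^ g.edgeSet.ncard
      = (-1) ^ (n - 1) * (Nat.factorial (n - 1) : ℤ) := by
  obtain ⟨m, rfl⟩ : ∃ m, n = m + 1 := ⟨n - 1, (Nat.succ_pred_eq_of_pos hn).symm⟩
  have key := Stmt16.connSum_formula m
  rw [Stmt16.connSum] at key
  simp only [Nat.add_sub_cancel]
  exact (Stmt16.sum_univ_indep _ _ _ _ _ _).trans key
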